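/- Let Y be an n×m matrix with entries in {0,1}. Define V(Y) = min(o, nm − o) where o is the number of ones; V_R(Y) = Σ_j min(o_j, n − o_j); V_C(Y) = Σ_i min(o_i, m − o_i). Then V(Y) ≤ ((1+√2)/2)·(V_R(Y) + V_C(Y)). -/
import Mathlib

open Finset

set_option maxHeartbeats 1000000 in
private lemma abstract_key (o Al Ah Bl Bh h k n m : ℕ)
    (h1 : o ≤ Al + Bl + h * k)
    (h2 : h * n + Al = o + Ah)
    (h3 : k * m + Bl = o + Bh)
    (h4 : 2 * o ≤ n * m) :
    (o : ℝ) ≤ (1 + Real.sqrt 2) / 2 * ((Al + Ah) + (Bl + Bh)) := by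
  have key : 2 * o * o ≤ 2 * o * (Al + Bl) + (h * n) * (k * m) := by
    calc 2 * o * o ≤ 2 * o * (Al + Bl + h * k) := Nat.mul_le_mul le_rfl h1
      _ = 2 * o * (Al + Bl) + (h * k) * (2 * o) := by ring
      _ ≤ 2 * o * (Al + Bl) + (h * k) * (n * m) := by
          exact Nat.add_le_add_left (Nat.mul_le_mul le_rfl h4) _
      _ = 2 * o * (Al + Bl) + (h * n) * (k * m) := by ring
  have keyR : (2:ℝ) * o * o ≤ 2 * o * (Al + Bl) + ((h:ℝ) * n) * ((k:ℝ) * m) := by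
    exact_mod_cast key
  have h2R : (h:ℝ) * n = (o:ℝ) + Ah - Al := by
    have := congrArg (fun t : ℕ => (t : ℝ)) h2
    push_cast at this; linarith
  have h3R : (k:ℝ) * m = (o:ℝ) + Bh - Bl := by
    have := congrArg (fun t : ℕ => (t : ℝ)) h3
    push_cast at this; linarith
  rw [h2R, h3R] at keyR
  have hAl : (0:ℝ) ≤ Al := Nat.cast_nonneg _
  have hAh : (0:ℝ) ≤ Ah := Nat.cast_nonneg _
  have hBl : (0:ℝ) ≤ Bl := Nat.cast_nonneg _
  have hBh : (0:ℝ) ≤ Bh := Nat.cast_nonneg _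
  have hsq : (2 * (o:ℝ) - (((Al:ℝ) + Ah) + ((Bl:ℝ) + Bh)))^2
      ≤ 2 * (((Al:ℝ) + Ah) + ((Bl:ℝ) + Bh))^2 := by
    nlinarith [keyR, sq_nonneg ((Ah:ℝ) + Al - Bh - Bl), mul_nonneg hAh hBl,
      mul_nonneg hAl hBh, mul_nonneg hAl hBl, mul_nonneg hAh hBh]
  set s : ℝ := ((Al:ℝ) + Ah) + ((Bl:ℝ) + Bh) with hs_def
  have hs : 0 ≤ s := by rw [hs_def]; positivity
  clear_value s
  have hsqrt2 : Real.sqrt 2 ^ 2 = 2 := Real.sq_sqrt (by norm_num)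
  have hsqrt2n : 0 ≤ Real.sqrt 2 := Real.sqrt_nonneg 2
  have habs : |2 * (o:ℝ) - s| ≤ Real.sqrt 2 * s := by
    have h1' : |2 * (o:ℝ) - s| = Real.sqrt ((2 * (o:ℝ) - s)^2) := (Real.sqrt_sq_eq_abs _).symm
    rw [h1']
    have h2' : Real.sqrt (2 * s^2) = Real.sqrt 2 * s := by
      rw [Real.sqrt_mul (by norm_num : (0:ℝ) ≤ 2), Real.sqrt_sq hs]
    rw [← h2']
    exact Real.sqrt_le_sqrt hsq
  have hle' := le_abs_self (2 * (o:ℝ) - s)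
  have hfin : 2 * (o:ℝ) - s ≤ Real.sqrt 2 * s := le_trans hle' habs
  linarith [hfin]

private lemma half_case (n m : ℕ) (Y : Fin n → Fin m → Bool)
    (h4 : 2 * (Finset.univ.filter (fun p : Fin n × Fin m => Y p.1 p.2 = true)).card ≤ n * m) :
    (((Finset.univ.filter (fun p : Fin n × Fin m => Y p.1 p.2 = true)).card : ℕ) : ℝ) ≤
      (1 + Real.sqrt 2) / 2 *
      (((∑ j : Fin m,
          min ((Finset.univ.filter (fun i : Fin n => Y i j = true)).card
            ) (n - (Finset.univ.filter (fun i : Fin n => Y i j = true)).card) : ℕ) : ℝ) +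
        ((∑ i : Fin n,
          min ((Finset.univ.filter (fun j : Fin m => Y i j = true)).card
            ) (m - (Finset.univ.filter (fun j : Fin m => Y i j = true)).card) : ℕ) : ℝ)) := by
  classical
  set e : Fin n → Fin m → ℕ := fun i j => if Y i j = true then 1 else 0 with he
  set C : Fin m → ℕ := fun j => (Finset.univ.filter (fun i : Fin n => Y i j = true)).card with hC
  set R : Fin n → ℕ := fun i => (Finset.univ.filter (fun j : Fin m => Y i j = true)).card with hR
  set o : ℕ := (Finset.univ.filter (fun p : Fin n × Fin m => Y p.1 p.2 = true)).card with ho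
  have hCe : ∀ j, C j = ∑ i, e i j := fun j => Finset.card_filter _ _
  have hRe : ∀ i, R i = ∑ j, e i j := fun i => Finset.card_filter _ _
  have hCn : ∀ j, C j ≤ n := by
    intro j
    calc C j ≤ (Finset.univ : Finset (Fin n)).card := Finset.card_filter_le _ _
      _ = n := by simp
  have hRm : ∀ i, R i ≤ m := by
    intro i
    calc R i ≤ (Finset.univ : Finset (Fin m)).card := Finset.card_filter_le _ _
      _ = m := by simp
  have ho_sum : o = ∑ p : Fin n × Fin m, e p.1 p.2 := Finset.card_filter _ _
  have ho_col : o = ∑ j, C j := by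
    rw [ho_sum, Fintype.sum_prod_type]
    rw [Finset.sum_comm]
    exact Finset.sum_congr rfl (fun j _ => (hCe j).symm)
  have ho_row : o = ∑ i, R i := by
    rw [ho_sum, Fintype.sum_prod_type]
    exact Finset.sum_congr rfl (fun i _ => (hRe i).symm)
  set H : Finset (Fin m) := Finset.univ.filter (fun j => n < 2 * C j) with hH
  set K : Finset (Fin n) := Finset.univ.filter (fun i => m < 2 * R i) with hK
  set Al : ℕ := ∑ j ∈ Finset.univ.filter (fun j => ¬ n < 2 * C j), C j with hAl
  set Ah : ℕ := ∑ j ∈ H, (n - C j) with hAh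
  set Bl : ℕ := ∑ i ∈ Finset.univ.filter (fun i => ¬ m < 2 * R i), R i with hBl
  set Bh : ℕ := ∑ i ∈ K, (m - R i) with hBh
  have ho_split : o = (∑ j ∈ H, C j) + Al := by
    rw [ho_col, ← Finset.sum_filter_add_sum_filter_not Finset.univ (fun j => n < 2 * C j)]
  have ho_split' : o = (∑ i ∈ K, R i) + Bl := by
    rw [ho_row, ← Finset.sum_filter_add_sum_filter_not Finset.univ (fun i => m < 2 * R i)]
  -- h2
  have h2 : H.card * n + Al = o + Ah := by
    have hsum : ∑ j ∈ H, n = H.card * n := by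
      rw [Finset.sum_const, smul_eq_mul]
    have hsum2 : ∑ j ∈ H, n = Ah + ∑ j ∈ H, C j := by
      rw [hAh, ← Finset.sum_add_distrib]
      exact Finset.sum_congr rfl (fun j _ => (Nat.sub_add_cancel (hCn j)).symm)
    omega
  have h3 : K.card * m + Bl = o + Bh := by
    have hsum : ∑ i ∈ K, m = K.card * m := by
      rw [Finset.sum_const, smul_eq_mul]
    have hsum2 : ∑ i ∈ K, m = Bh + ∑ i ∈ K, R i := by
      rw [hBh, ← Finset.sum_add_distrib]
      exact Finset.sum_congr rfl (fun i _ => (Nat.sub_add_cancel (hRm i)).symm)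
    omega
  -- h1
  have h1 : o ≤ Al + Bl + H.card * K.card := by
    have step1 : ∑ j ∈ H, C j
        = ∑ j ∈ H, ((∑ i ∈ K, e i j) + ∑ i ∈ Finset.univ.filter (fun i => ¬ m < 2 * R i), e i j) := by
      refine Finset.sum_congr rfl (fun j _ => ?_)
      rw [hCe j, ← Finset.sum_filter_add_sum_filter_not Finset.univ (fun i => m < 2 * R i)]
    have step2 : ∀ j, (∑ i ∈ K, e i j) ≤ K.card := by
      intro j
      calc (∑ i ∈ K, e i j) ≤ ∑ i ∈ K, 1 := by
            refine Finset.sum_le_sum (fun i _ => ?_)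
            simp only [he]
            split <;> omega
        _ = K.card := by simp
    have step3 : ∑ j ∈ H, (∑ i ∈ Finset.univ.filter (fun i => ¬ m < 2 * R i), e i j) ≤ Bl := by
      calc ∑ j ∈ H, (∑ i ∈ Finset.univ.filter (fun i => ¬ m < 2 * R i), e i j)
          ≤ ∑ j : Fin m, (∑ i ∈ Finset.univ.filter (fun i => ¬ m < 2 * R i), e i j) := by
            refine Finset.sum_le_sum_of_subset (Finset.subset_univ H)
        _ = ∑ i ∈ Finset.univ.filter (fun i => ¬ m < 2 * R i), ∑ j : Fin m, e i j :=
            Finset.sum_comm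
        _ = Bl := Finset.sum_congr rfl (fun i _ => (hRe i).symm)
    have step4 : ∑ j ∈ H, C j ≤ H.card * K.card + Bl := by
      rw [step1, Finset.sum_add_distrib]
      have a1 : ∑ j ∈ H, (∑ i ∈ K, e i j) ≤ ∑ j ∈ H, K.card :=
        Finset.sum_le_sum (fun j _ => step2 j)
      have a2 : ∑ j ∈ H, K.card = H.card * K.card := by
        rw [Finset.sum_const, smul_eq_mul]
      omega
    omega
  have main := abstract_key o Al Ah Bl Bh H.card K.card n m h1 h2 h3 h4
  -- identify sums
  have hVR : (∑ j : Fin m, min (C j) (n - C j)) = Al + Ah := by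
    rw [← Finset.sum_filter_add_sum_filter_not Finset.univ (fun j => n < 2 * C j)
      (fun j => min (C j) (n - C j))]
    have e1 : ∑ j ∈ Finset.univ.filter (fun j => n < 2 * C j), min (C j) (n - C j) = Ah := by
      refine Finset.sum_congr rfl (fun j hj => ?_)
      simp only [hH, Finset.mem_filter] at hj
      have := hCn j
      omega
    have e2 : ∑ j ∈ Finset.univ.filter (fun j => ¬ n < 2 * C j), min (C j) (n - C j) = Al := by
      refine Finset.sum_congr rfl (fun j hj => ?_)
      simp only [Finset.mem_filter] at hj
      have := hCn j
      omega
    omega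
  have hVC : (∑ i : Fin n, min (R i) (m - R i)) = Bl + Bh := by
    rw [← Finset.sum_filter_add_sum_filter_not Finset.univ (fun i => m < 2 * R i)
      (fun i => min (R i) (m - R i))]
    have e1 : ∑ i ∈ Finset.univ.filter (fun i => m < 2 * R i), min (R i) (m - R i) = Bh := by
      refine Finset.sum_congr rfl (fun i hi => ?_)
      simp only [hK, Finset.mem_filter] at hi
      have := hRm i
      omega
    have e2 : ∑ i ∈ Finset.univ.filter (fun i => ¬ m < 2 * R i), min (R i) (m - R i) = Bl := by
      refine Finset.sum_congr rfl (fun i hi => ?_)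
      simp only [Finset.mem_filter] at hi
      have := hRm i
      omega
    omega
  have hVR' : (∑ j : Fin m,
      min ((Finset.univ.filter (fun i : Fin n => Y i j = true)).card)
        (n - (Finset.univ.filter (fun i : Fin n => Y i j = true)).card)) = Al + Ah := hVR
  have hVC' : (∑ i : Fin n,
      min ((Finset.univ.filter (fun j : Fin m => Y i j = true)).card)
        (m - (Finset.univ.filter (fun j : Fin m => Y i j = true)).card)) = Bl + Bh := hVC
  rw [hVR', hVC']
  push_cast
  push_cast at main
  linarith

open Finset in
/-- For any 0-1 matrix, V(Y) ≤ ((1+√2)/2)(V_R(Y) + V_C(Y)) under L1 cost about medians. -/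
theorem l1_cost_le_ratio_row_col (n m : ℕ) (Y : Fin n → Fin m → Bool)
    (o : ℕ)
    (ho : o = (Finset.univ.filter (fun p : Fin n × Fin m => Y p.1 p.2 = true)).card) :
    ((min o (n * m - o) : ℕ) : ℝ) ≤ (1 + Real.sqrt 2) / 2 *
      (((∑ j : Fin m,
          min ((Finset.univ.filter (fun i : Fin n => Y i j = true)).card)
            (n - (Finset.univ.filter (fun i : Fin n => Y i j = true)).card) : ℕ) : ℝ) +
        ((∑ i : Fin n,
          min ((Finset.univ.filter (fun j : Fin m => Y i j = true)).card)
            (m - (Finset.univ.filter (fun j : Fin m => Y i j = true)).card) : ℕ) : ℝ)) := by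
  classical
  subst ho
  set o : ℕ := (Finset.univ.filter (fun p : Fin n × Fin m => Y p.1 p.2 = true)).card with ho
  by_cases hle : 2 * o ≤ n * m
  · calc ((min o (n * m - o) : ℕ) : ℝ) ≤ (o : ℝ) := by
          exact_mod_cast Nat.cast_le.mpr (min_le_left _ _)
      _ ≤ _ := half_case n m Y hle
  · -- complement matrix
    set Y' : Fin n → Fin m → Bool := fun i j => !Y i j with hY'
    have hcompl : (Finset.univ.filter (fun p : Fin n × Fin m => Y' p.1 p.2 = true)).card + o
        = n * m := by
      have heq : (Finset.univ.filter (fun p : Fin n × Fin m => Y' p.1 p.2 = true))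
          = (Finset.univ.filter (fun p : Fin n × Fin m => ¬ Y p.1 p.2 = true)) := by
        refine Finset.filter_congr (fun p _ => ?_)
        simp [hY']
      rw [heq, Nat.add_comm, Finset.card_filter_add_card_filter_not]
      simp
    set o' : ℕ := (Finset.univ.filter (fun p : Fin n × Fin m => Y' p.1 p.2 = true)).card with ho'
    have h4' : 2 * o' ≤ n * m := by omega
    have hcolC : ∀ j, (Finset.univ.filter (fun i : Fin n => Y' i j = true)).card
        + (Finset.univ.filter (fun i : Fin n => Y i j = true)).card = n := by
      intro j
      have heq : (Finset.univ.filter (fun i : Fin n => Y' i j = true))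
          = (Finset.univ.filter (fun i : Fin n => ¬ Y i j = true)) := by
        refine Finset.filter_congr (fun i _ => ?_)
        simp [hY']
      rw [heq, Nat.add_comm, Finset.card_filter_add_card_filter_not]
      simp
    have hrowC : ∀ i, (Finset.univ.filter (fun j : Fin m => Y' i j = true)).card
        + (Finset.univ.filter (fun j : Fin m => Y i j = true)).card = m := by
      intro i
      have heq : (Finset.univ.filter (fun j : Fin m => Y' i j = true))
          = (Finset.univ.filter (fun j : Fin m => ¬ Y i j = true)) := by
        refine Finset.filter_congr (fun j _ => ?_)
        simp [hY']
      rw [heq, Nat.add_comm, Finset.card_filter_add_card_filter_not]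
      simp
    have hCle : ∀ j, (Finset.univ.filter (fun i : Fin n => Y i j = true)).card ≤ n := by
      intro j; have := hcolC j; omega
    have hRle : ∀ i, (Finset.univ.filter (fun j : Fin m => Y i j = true)).card ≤ m := by
      intro i; have := hrowC i; omega
    have hVR : (∑ j : Fin m,
          min ((Finset.univ.filter (fun i : Fin n => Y' i j = true)).card)
            (n - (Finset.univ.filter (fun i : Fin n => Y' i j = true)).card))
        = (∑ j : Fin m,
          min ((Finset.univ.filter (fun i : Fin n => Y i j = true)).card)
            (n - (Finset.univ.filter (fun i : Fin n => Y i j = true)).card)) := by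
      refine Finset.sum_congr rfl (fun j _ => ?_)
      have := hcolC j
      omega
    have hVC : (∑ i : Fin n,
          min ((Finset.univ.filter (fun j : Fin m => Y' i j = true)).card)
            (m - (Finset.univ.filter (fun j : Fin m => Y' i j = true)).card))
        = (∑ i : Fin n,
          min ((Finset.univ.filter (fun j : Fin m => Y i j = true)).card)
            (m - (Finset.univ.filter (fun j : Fin m => Y i j = true)).card)) := by
      refine Finset.sum_congr rfl (fun i _ => ?_)
      have := hrowC i
      omega
    have main := half_case n m Y' h4'
    rw [hVR, hVC] at main
    calc ((min o (n * m - o) : ℕ) : ℝ) ≤ ((n * m - o : ℕ) : ℝ) := by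
          exact_mod_cast Nat.cast_le.mpr (min_le_right _ _)
      _ = (o' : ℝ) := by
          congr 1
          omega
      _ ≤ _ := main
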